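/- Let F be a functor from rings to a category 𝔇 and A a ring such that F is M₂-stable on both A and M₂A. Let B be a ring containing A as a subring, and let V, W ∈ B satisfy W·A ⊆ A, A·V ⊆ A, and aVWa' = aa' for all a, a' ∈ A. Then φ^{V,W} : A → A, a ↦ WaV, is a ring homomorphism and F(φ^{V,W}) is the identity map of F(A). -/

import Mathlib

/-!
Statement 1.  Let `F` be a functor from rings to a category `𝔇` and `A` a ring
such that `F` is `M₂`-stable on both `A` and `M₂A`.  Let `B` be a ring
containing `A` as a subring, and let `V, W ∈ B` satisfy `W·A ⊆ A`, `A·V ⊆ A`,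
and `aVWa' = aa'` for all `a, a' ∈ A`.  Then `φ^{V,W} : A → A`, `a ↦ WaV`, is
a ring homomorphism and `F(φ^{V,W})` is the identity map of `F(A)`.

Here "rings" means not necessarily unital rings with (not necessarily unital)
ring homomorphisms; the subring `A ⊆ B` is a non-unital subring.
-/

set_option autoImplicit false
noncomputable section

open CategoryTheory

/-- `M₂A`: the ring of 2×2 matrices over `A`. -/
abbrev M2 (A : Type) [NonUnitalRing A] : Type := Matrix (Fin 2) (Fin 2) A

/-- The corner inclusion `ι₀ : A → M₂A`, `a ↦ a·e₁₁`. -/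
def iota0 (A : Type) [NonUnitalRing A] : A →ₙ+* M2 A where
  toFun a := Matrix.single 0 0 a
  map_mul' := by
    intro a b
    simpa using (Matrix.single_mul_single_same (0 : Fin 2) 0 (0 : Fin 2) a b).symm
  map_zero' := by simp
  map_add' := by intro a b; ext i j; simp [Matrix.single]; aesop

/-- A functor from the category of (not necessarily unital) rings to a
category `𝔇`. -/
structure RingFunctor (D : Type*) [Category D] where
  obj : (A : Type) → [NonUnitalRing A] → D
  map : {A B : Type} → [NonUnitalRing A] → [NonUnitalRing B] →
    (A →ₙ+* B) → (obj A ⟶ obj B)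
  map_id : ∀ (A : Type) [NonUnitalRing A],
    map (NonUnitalRingHom.id A) = 𝟙 (obj A)
  map_comp : ∀ {A B C : Type} [NonUnitalRing A] [NonUnitalRing B]
    [NonUnitalRing C] (f : A →ₙ+* B) (g : B →ₙ+* C),
    map (g.comp f) = map f ≫ map g

/-- `F` is `M₂`-stable on `A` if it sends the corner inclusion
`ι₀ : A → M₂A` to an isomorphism. -/
def RingFunctor.M2Stable {D : Type*} [Category D] (F : RingFunctor D)
    (A : Type) [NonUnitalRing A] : Prop :=
  IsIso (F.map (iota0 A))

namespace PhiAux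

variable {B : Type} [NonUnitalRing B]

/-- left multiplier: identity in row 0, `W * ·` in row 1 -/
def lf (W : B) (i : Fin 2) (b : B) : B := if i = 0 then b else W * b

/-- right multiplier: identity in column 0, `· * V` in column 1 -/
def rf (V : B) (j : Fin 2) (b : B) : B := if j = 0 then b else b * V

lemma lf_zero (W : B) (i : Fin 2) : lf W i 0 = 0 := by simp [lf]

lemma rf_zero (V : B) (j : Fin 2) : rf V j 0 = 0 := by simp [rf]

lemma lf_add (W : B) (i : Fin 2) (b c : B) : lf W i (b + c) = lf W i b + lf W i c := by
  simp only [lf]; split <;> simp [mul_add]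

lemma rf_add (V : B) (j : Fin 2) (b c : B) : rf V j (b + c) = rf V j b + rf V j c := by
  simp only [rf]; split <;> simp [add_mul]

lemma lf_mul (W : B) (i : Fin 2) (b c : B) : lf W i b * c = lf W i (b * c) := by
  simp only [lf]; split <;> simp [mul_assoc]

lemma rf_mul (V : B) (j : Fin 2) (b c : B) : b * rf V j c = rf V j (b * c) := by
  simp only [rf]; split <;> simp [mul_assoc]

lemma lf_mem (A : NonUnitalSubring B) (W : B)
    (hWA : ∀ a : B, a ∈ A → W * a ∈ A) (i : Fin 2) {b : B} (hb : b ∈ A) :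
    lf W i b ∈ A := by
  unfold lf; split
  · exact hb
  · exact hWA b hb

lemma rf_mem (A : NonUnitalSubring B) (V : B)
    (hAV : ∀ a : B, a ∈ A → a * V ∈ A) (j : Fin 2) {b : B} (hb : b ∈ A) :
    rf V j b ∈ A := by
  unfold rf; split
  · exact hb
  · exact hAV b hb

lemma key (A : NonUnitalSubring B) (V W : B)
    (hVW : ∀ a a' : B, a ∈ A → a' ∈ A → a * V * (W * a') = a * a')
    (k : Fin 2) {p q : B} (hp : p ∈ A) (hq : q ∈ A) :
    rf V k p * lf W k q = p * q := by
  unfold rf lf; split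
  · rfl
  · exact hVW p q hp hq

lemma summand (A : NonUnitalSubring B) (V W : B)
    (hAV : ∀ a : B, a ∈ A → a * V ∈ A)
    (hVW : ∀ a a' : B, a ∈ A → a' ∈ A → a * V * (W * a') = a * a')
    (i j k : Fin 2) {p q : B} (hp : p ∈ A) (hq : q ∈ A) :
    lf W i (rf V k p) * lf W k (rf V j q) = lf W i (rf V j (p * q)) := by
  rw [lf_mul, key A V W hVW k hp (rf_mem A V hAV j hq), rf_mul]

/-- The homomorphism `φ^{V,W} : A → A`, `a ↦ WaV`. -/
def phi (A : NonUnitalSubring B) (V W : B)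
    (hWA : ∀ a : B, a ∈ A → W * a ∈ A)
    (hAV : ∀ a : B, a ∈ A → a * V ∈ A)
    (hVW : ∀ a a' : B, a ∈ A → a' ∈ A → a * V * (W * a') = a * a') :
    A →ₙ+* A where
  toFun a := ⟨W * (a : B) * V, hAV _ (hWA _ a.2)⟩
  map_mul' a b := by
    apply Subtype.ext
    have h := hVW (W * (a : B)) (b : B) (hWA _ a.2) b.2
    show W * ((a : B) * (b : B)) * V = (W * (a : B) * V) * (W * (b : B) * V)
    rw [← mul_assoc (W * (a : B) * V) (W * (b : B)) V, h, mul_assoc W (a : B) (b : B)]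
  map_zero' := by apply Subtype.ext; simp
  map_add' a b := by
    apply Subtype.ext
    show W * ((a : B) + (b : B)) * V = W * (a : B) * V + W * (b : B) * V
    rw [mul_add, add_mul]

/-- The homomorphism `Ψ : M₂A → M₂A`, `x ↦ [[x₀₀, x₀₁V],[Wx₁₀, Wx₁₁V]]`. -/
def Psi (A : NonUnitalSubring B) (V W : B)
    (hWA : ∀ a : B, a ∈ A → W * a ∈ A)
    (hAV : ∀ a : B, a ∈ A → a * V ∈ A)
    (hVW : ∀ a a' : B, a ∈ A → a' ∈ A → a * V * (W * a') = a * a') :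
    M2 A →ₙ+* M2 A where
  toFun x i j := ⟨lf W i (rf V j ((x i j : A) : B)),
    lf_mem A W hWA i (rf_mem A V hAV j (x i j).2)⟩
  map_mul' x y := by
    funext i j
    apply Subtype.ext
    simp only [Matrix.mul_apply, Fin.sum_univ_two]
    erw [Matrix.mul_apply, Fin.sum_univ_two]
    push_cast
    rw [rf_add, lf_add,
      summand A V W hAV hVW i j 0 (x i 0).2 (y 0 j).2,
      summand A V W hAV hVW i j 1 (x i 1).2 (y 1 j).2]
  map_zero' := by
    funext i j
    apply Subtype.ext
    show lf W i (rf V j (((0 : M2 A) i j : A) : B)) = (((0 : M2 A) i j : A) : B)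
    show lf W i (rf V j (0 : B)) = (0 : B)
    rw [rf_zero, lf_zero]
  map_add' x y := by
    funext i j
    apply Subtype.ext
    show lf W i (rf V j (((x + y) i j : A) : B)) =
      lf W i (rf V j ((x i j : A) : B)) + lf W i (rf V j ((y i j : A) : B))
    have h : (((x + y) i j : A) : B) = ((x i j : A) : B) + ((y i j : A) : B) := rfl
    rw [h, rf_add, lf_add]

/-- The swap automorphism of `M₂A`. -/
def tau (A : Type) [NonUnitalRing A] : M2 A →ₙ+* M2 A where
  toFun x i j := x (i + 1) (j + 1)
  map_mul' x y := by
    funext i j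
    simp only [Matrix.mul_apply, Fin.sum_univ_two]
    erw [Matrix.mul_apply, Fin.sum_univ_two]
    have e0 : (0 : Fin 2) + 1 = 1 := by decide
    have e1 : (1 : Fin 2) + 1 = 0 := by decide
    rw [e0, e1]
    exact add_comm _ _
  map_zero' := rfl
  map_add' x y := rfl

lemma tau_tau (A : Type) [NonUnitalRing A] :
    (tau A).comp (tau A) = NonUnitalRingHom.id (M2 A) := by
  apply NonUnitalRingHom.ext
  intro x
  funext i j
  show x (i + 1 + 1) (j + 1 + 1) = x i j
  have h : ∀ k : Fin 2, k + 1 + 1 = k := by decide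
  rw [h, h]

end PhiAux

theorem phiVW_ringHom_and_F_identity
    {D : Type*} [Category D] (F : RingFunctor D)
    (B : Type) [NonUnitalRing B] (A : NonUnitalSubring B)
    (h₁ : F.M2Stable A) (h₂ : F.M2Stable (M2 A))
    (V W : B)
    (hWA : ∀ a : B, a ∈ A → W * a ∈ A)
    (hAV : ∀ a : B, a ∈ A → a * V ∈ A)
    (hVW : ∀ a a' : B, a ∈ A → a' ∈ A → a * V * (W * a') = a * a') :
    ∃ φ : A →ₙ+* A,
      (∀ a : A, (φ a : B) = W * (a : B) * V) ∧
      F.map φ = 𝟙 (F.obj A) := by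
  classical
  haveI hiso : IsIso (F.map (iota0 A)) := h₁
  set φ := PhiAux.phi A V W hWA hAV hVW with hφ
  set Ψ := PhiAux.Psi A V W hWA hAV hVW with hΨ
  set τ := PhiAux.tau (A : Type) with hτ
  -- Ψ ∘ ι₀ = ι₀
  have hc0 : Ψ.comp (iota0 A) = iota0 A := by
    apply NonUnitalRingHom.ext
    intro a
    funext i j
    apply Subtype.ext
    show PhiAux.lf W i (PhiAux.rf V j (((Matrix.single 0 0 a) i j : A) : B)) =
      ((Matrix.single 0 0 a) i j : A) 
    fin_cases i <;> fin_cases j <;>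
      simp [Matrix.single, PhiAux.lf, PhiAux.rf]
  -- ι₁ := τ ∘ ι₀ ;  Ψ ∘ ι₁ = ι₁ ∘ φ
  set ι₁ := τ.comp (iota0 A) with hι₁
  have hc1 : Ψ.comp ι₁ = ι₁.comp φ := by
    apply NonUnitalRingHom.ext
    intro a
    funext i j
    apply Subtype.ext
    show PhiAux.lf W i (PhiAux.rf V j
        (((Matrix.single 0 0 a) (i + 1) (j + 1) : A) : B)) =
      ((Matrix.single 0 0 (φ a)) (i + 1) (j + 1) : A)
    have hφa : ((φ a : A) : B) = W * (a : B) * V := rfl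
    fin_cases i <;> fin_cases j <;>
      simp [Matrix.single, PhiAux.lf, PhiAux.rf, hφa, mul_assoc]
  -- F(Ψ) = 1
  have hPsiId : F.map Ψ = 𝟙 (F.obj (M2 A)) := by
    have h : F.map (iota0 A) ≫ F.map Ψ = F.map (iota0 A) ≫ 𝟙 (F.obj (M2 A)) := by
      rw [← F.map_comp, hc0, Category.comp_id]
    exact (cancel_epi (F.map (iota0 A))).mp h
  -- F(τ) and F(ι₁) are isos
  haveI hτiso : IsIso (F.map τ) := by
    refine ⟨F.map τ, ?_, ?_⟩ <;>
      rw [← F.map_comp, hτ, PhiAux.tau_tau, F.map_id]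
  haveI hι₁iso : IsIso (F.map ι₁) := by
    rw [hι₁, F.map_comp]
    infer_instance
  -- conclude
  have hfinal : F.map φ ≫ F.map ι₁ = 𝟙 (F.obj A) ≫ F.map ι₁ := by
    rw [← F.map_comp, ← hc1, F.map_comp, hPsiId, Category.comp_id, Category.id_comp]
  exact ⟨φ, fun a => rfl, (cancel_mono (F.map ι₁)).mp hfinal⟩

end
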